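/- arXiv:1303.2956 — 2 statements merged into one kernel-verified Lean document; each statement's English description precedes it below -/
import Mathlib

section
/- Let γ(s,t) be an arclength-parametrized inextensible flow of partially null curves in E⁴₁ with partially null Frenet frame {T, N, B₁, B₂}, curvatures k₁, k₂ (k₃ = 0), and flow ∂γ/∂t = β₁T + β₂N + β₃B₁ + β₄B₂ (so ∂β₁/∂s = β₂k₁). Setting ψ₁ = ⟨∂N/∂t, B₁⟩, ψ₂ = ⟨∂N/∂t, B₂⟩, ψ₃ = ⟨∂B₁/∂t, B₂⟩, the frame evolves by: ∂N/∂t = −(∂β₂/∂s + β₁k₁ − β₄k₂) T + ψ₂ B₁ + ψ₁ B₂, ∂B₁/∂t = −(∂β₄/∂s) T − ψ₁ N + ψ₃ B₁, and ∂B₂/∂t = −(∂β₃/∂s + k₂β₂) T − ψ₂ N − ψ₃ B₂. -/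
/-!
Formalization of inextensible flows of partially null / pseudo null curves in
Minkowski space-time `E⁴₁` (ℝ⁴ with signature (-,+,+,+)).
-/

noncomputable section

set_option maxHeartbeats 1000000

/-- The Minkowski bilinear form on `ℝ⁴` with signature `(-,+,+,+)`. -/
def mink (v w : Fin 4 → ℝ) : ℝ :=
  -(v 0 * w 0) + v 1 * w 1 + v 2 * w 2 + v 3 * w 3

/-- The Minkowski norm `‖v‖ = √|⟨v,v⟩|`. -/
def mnorm (v : Fin 4 → ℝ) : ℝ := Real.sqrt |mink v v|

lemma mink_comm' (a b : Fin 4 → ℝ) : mink a b = mink b a := by unfold mink; ring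

lemma mink_sub' (x a b : Fin 4 → ℝ) : mink x (a - b) = mink x a - mink x b := by
  simp [mink, Pi.sub_apply]; ring

lemma mink_combo' (x a b c d : Fin 4 → ℝ) (p q r u : ℝ) :
    mink x (p • a + q • b + r • c + u • d)
      = p * mink x a + q * mink x b + r * mink x c + u * mink x d := by
  simp [mink, Pi.add_apply, Pi.smul_apply, smul_eq_mul]; ring

lemma mink_combo3' (x a b c : Fin 4 → ℝ) (p q r : ℝ) :
    mink x (p • a + q • b + r • c) = p * mink x a + q * mink x b + r * mink x c := by
  simp [mink, Pi.add_apply, Pi.smul_apply, smul_eq_mul]; ring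

lemma mink_hasDerivAt {f g : ℝ → (Fin 4 → ℝ)} {f' g' : Fin 4 → ℝ} {t : ℝ}
    (hf : HasDerivAt f f' t) (hg : HasDerivAt g g' t) :
    HasDerivAt (fun x => mink (f x) (g x)) (mink f' (g t) + mink (f t) g') t := by
  have hfi : ∀ i, HasDerivAt (fun x => f x i) (f' i) t := fun i =>
    (ContinuousLinearMap.proj (R := ℝ) (φ := fun _ : Fin 4 => ℝ) i).hasFDerivAt.comp_hasDerivAt t hf
  have hgi : ∀ i, HasDerivAt (fun x => g x i) (g' i) t := fun i =>
    (ContinuousLinearMap.proj (R := ℝ) (φ := fun _ : Fin 4 => ℝ) i).hasFDerivAt.comp_hasDerivAt t hg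
  have h := ((((hfi 0).mul (hgi 0)).neg.add ((hfi 1).mul (hgi 1))).add
      ((hfi 2).mul (hgi 2))).add ((hfi 3).mul (hgi 3))
  have he : (fun x => mink (f x) (g x))
      = fun x => -(f x 0 * g x 0) + f x 1 * g x 1 + f x 2 * g x 2 + f x 3 * g x 3 := rfl
  rw [he]
  exact h.congr_deriv (by unfold mink; ring)

lemma pair_rel {f g : ℝ → (Fin 4 → ℝ)} {f' g' : Fin 4 → ℝ} {t c : ℝ}
    (hf : HasDerivAt f f' t) (hg : HasDerivAt g g' t)
    (h : ∀ x, mink (f x) (g x) = c) :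
    mink f' (g t) + mink (f t) g' = 0 := by
  have h1 := mink_hasDerivAt hf hg
  have h2 : (fun x => mink (f x) (g x)) = fun _ => c := funext h
  rw [h2] at h1
  exact h1.unique (hasDerivAt_const t c)

lemma sliceT {E : Type*} [NormedAddCommGroup E] [NormedSpace ℝ E]
    {F : ℝ → ℝ → E} (h : ContDiff ℝ (⊤ : ℕ∞) (fun p : ℝ × ℝ => F p.1 p.2)) (s t : ℝ) :
    HasDerivAt (fun x => F s x) (deriv (fun x => F s x) t) t := by
  have hd : DifferentiableAt ℝ (fun x => F s x) t := by
    have := ((h.differentiable (by simp)).comp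
      ((differentiable_const s).prodMk differentiable_id)).differentiableAt (x := t)
    exact this
  exact hd.hasDerivAt

lemma sliceS {E : Type*} [NormedAddCommGroup E] [NormedSpace ℝ E]
    {F : ℝ → ℝ → E} (h : ContDiff ℝ (⊤ : ℕ∞) (fun p : ℝ × ℝ => F p.1 p.2)) (s t : ℝ) :
    HasDerivAt (fun x => F x t) (deriv (fun x => F x t) s) s := by
  have hd : DifferentiableAt ℝ (fun x => F x t) s := by
    have := ((h.differentiable (by simp)).comp
      (differentiable_id.prodMk (differentiable_const t))).differentiableAt (x := s)
    exact this
  exact hd.hasDerivAt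

lemma clairaut {E : Type*} [NormedAddCommGroup E] [NormedSpace ℝ E]
    {G : ℝ × ℝ → E} (hG : ContDiff ℝ (⊤ : ℕ∞) G) (s t : ℝ) :
    deriv (fun x => deriv (fun y => G (y, x)) s) t
      = deriv (fun x => deriv (fun y => G (x, y)) t) s := by
  have hd : Differentiable ℝ G := hG.differentiable (by simp)
  set F' : ℝ × ℝ → (ℝ × ℝ) →L[ℝ] E := fun p => fderiv ℝ G p with hF'def
  have hF' : ContDiff ℝ (⊤ : ℕ∞) F' := hG.fderiv_right (by exact_mod_cast le_top)
  have hF'd : Differentiable ℝ F' := hF'.differentiable (by simp)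
  have h1 : ∀ x u : ℝ, HasDerivAt (fun y => G (y, x)) (F' (u, x) (1, 0)) u := by
    intro x u
    have := (hd (u, x)).hasFDerivAt.comp_hasDerivAt u
      ((hasDerivAt_id u).prodMk (hasDerivAt_const u x))
    simpa [Function.comp_def] using this
  have h2 : ∀ x u : ℝ, HasDerivAt (fun y => G (x, y)) (F' (x, u) (0, 1)) u := by
    intro x u
    have := (hd (x, u)).hasFDerivAt.comp_hasDerivAt u
      ((hasDerivAt_const u x).prodMk (hasDerivAt_id u))
    simpa [Function.comp_def] using this
  have e1 : (fun x => deriv (fun y => G (y, x)) s) = fun x => F' (s, x) (1, 0) :=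
    funext fun x => (h1 x s).deriv
  have e2 : (fun x => deriv (fun y => G (x, y)) t) = fun x => F' (x, t) (0, 1) :=
    funext fun x => (h2 x t).deriv
  rw [e1, e2]
  have hs1 : HasDerivAt (fun x => F' (s, x)) (fderiv ℝ F' (s, t) (0, 1)) t := by
    have := (hF'd (s, t)).hasFDerivAt.comp_hasDerivAt t
      ((hasDerivAt_const t s).prodMk (hasDerivAt_id t))
    simpa [Function.comp_def] using this
  have hs2 : HasDerivAt (fun x => F' (x, t)) (fderiv ℝ F' (s, t) (1, 0)) s := by
    have := (hF'd (s, t)).hasFDerivAt.comp_hasDerivAt s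
      ((hasDerivAt_id s).prodMk (hasDerivAt_const s t))
    simpa [Function.comp_def] using this
  have ha1 : HasDerivAt (fun x => F' (s, x) (1, 0)) (fderiv ℝ F' (s, t) (0, 1) (1, 0)) t :=
    (ContinuousLinearMap.apply ℝ E ((1 : ℝ), (0 : ℝ))).hasFDerivAt.comp_hasDerivAt t hs1
  have ha2 : HasDerivAt (fun x => F' (x, t) (0, 1)) (fderiv ℝ F' (s, t) (1, 0) (0, 1)) s :=
    (ContinuousLinearMap.apply ℝ E ((0 : ℝ), (1 : ℝ))).hasFDerivAt.comp_hasDerivAt s hs2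
  rw [ha1.deriv, ha2.deriv]
  exact second_derivative_symmetric (fun y => (hd y).hasFDerivAt)
    (hF'd (s, t)).hasFDerivAt (0, 1) (1, 0)

lemma basis_decomp (t n b₁ b₂ v : Fin 4 → ℝ)
    (htt : mink t t = 1) (hnn : mink n n = 1) (hb₁b₁ : mink b₁ b₁ = 0)
    (hb₂b₂ : mink b₂ b₂ = 0) (hb₁b₂ : mink b₁ b₂ = 1)
    (htn : mink t n = 0) (htb₁ : mink t b₁ = 0) (htb₂ : mink t b₂ = 0)
    (hnb₁ : mink n b₁ = 0) (hnb₂ : mink n b₂ = 0) :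
    v = mink v t • t + mink v n • n + mink v b₂ • b₁ + mink v b₁ • b₂ := by
  classical
  set η : Matrix (Fin 4) (Fin 4) ℝ := Matrix.diagonal ![-1, 1, 1, 1] with hη
  set M : Matrix (Fin 4) (Fin 4) ℝ := Matrix.of ![t, n, b₁, b₂] with hM
  have hG : M * η * M.transpose = !![1,0,0,0; 0,1,0,0; 0,0,0,1; 0,0,1,0] := by
    have htt' := htt; have hnn' := hnn; have h11' := hb₁b₁; have h22' := hb₂b₂
    have h12' := hb₁b₂; have htn' := htn; have ht1' := htb₁; have ht2' := htb₂
    have hn1' := hnb₁; have hn2' := hnb₂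
    simp only [mink] at htt' hnn' h11' h22' h12' htn' ht1' ht2' hn1' hn2'
    ext i j
    fin_cases i <;> fin_cases j <;>
      simp [hM, hη, Matrix.mul_apply, Fin.sum_univ_four, Matrix.diagonal_apply,
        Matrix.transpose_apply, Matrix.vecHead, Matrix.vecTail, Matrix.vecMul,
        dotProduct, Matrix.vecMul_diagonal] <;>
      first
        | linear_combination htt' | linear_combination hnn' | linear_combination h11'
        | linear_combination h22' | linear_combination h12' | linear_combination htn'
        | linear_combination ht1' | linear_combination ht2' | linear_combination hn1'
        | linear_combination hn2'
  have hdetη : η.det = -1 := by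
    simp [hη, Matrix.det_diagonal, Fin.prod_univ_four]
  have hdetM : M.det ≠ 0 := by
    intro h
    have hdetG : (M * η * M.transpose).det = -1 := by
      rw [hG]; simp [Matrix.det_succ_row_zero, Fin.sum_univ_succ]
    rw [Matrix.det_mul, Matrix.det_mul, hdetη, Matrix.det_transpose, h] at hdetG
    norm_num at hdetG
  set w : Fin 4 → ℝ :=
    v - (mink v t • t + mink v n • n + mink v b₂ • b₁ + mink v b₁ • b₂) with hw
  have hot : mink t w = 0 := by
    rw [hw, mink_sub', mink_combo', htt, htn, htb₁, htb₂, mink_comm' t v]; ring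
  have hon : mink n w = 0 := by
    rw [hw, mink_sub', mink_combo', hnn, mink_comm' n t, htn, hnb₁, hnb₂,
      mink_comm' n v]; ring
  have ho1 : mink b₁ w = 0 := by
    rw [hw, mink_sub', mink_combo', hb₁b₁, hb₁b₂, mink_comm' b₁ t, htb₁,
      mink_comm' b₁ n, hnb₁, mink_comm' b₁ v]; ring
  have ho2 : mink b₂ w = 0 := by
    rw [hw, mink_sub', mink_combo', hb₂b₂, mink_comm' b₂ b₁, hb₁b₂,
      mink_comm' b₂ t, htb₂, mink_comm' b₂ n, hnb₂, mink_comm' b₂ v]; ring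
  have hmv : M.mulVec (η.mulVec w) = 0 := by
    funext i
    have key : ∀ u : Fin 4 → ℝ, dotProduct u (η.mulVec w) = mink u w := by
      intro u
      simp [hη, Matrix.mulVec, dotProduct, Fin.sum_univ_four,
        Matrix.diagonal_apply, mink]
      try ring
    have hh : M.mulVec (η.mulVec w) i = dotProduct (M i) (η.mulVec w) := rfl
    rw [hh, key (M i)]
    fin_cases i <;> simp only [hM, Matrix.of_apply, Matrix.cons_val_zero,
      Matrix.cons_val_one, Matrix.head_cons, Matrix.cons_val_two, Matrix.tail_cons,
      Matrix.cons_val_three] <;>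
      first | exact hot | exact hon | exact ho1 | exact ho2
  have hinj : Function.Injective M.mulVec :=
    Matrix.mulVec_injective_iff_isUnit.mpr ((Matrix.isUnit_iff_isUnit_det M).mpr
      (isUnit_iff_ne_zero.mpr hdetM))
  have hηw : η.mulVec w = 0 := by
    apply hinj
    rw [hmv, Matrix.mulVec_zero]
  have hw0 : w = 0 := by
    funext i
    have h := congrFun hηw i
    fin_cases i <;>
      simp [hη, Matrix.mulVec, dotProduct, Fin.sum_univ_four,
        Matrix.diagonal_apply] at h <;>
      simpa using h
  rw [hw] at hw0
  exact (sub_eq_zero.mp hw0)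
theorem frame_evolution_partially_null
    (γ T N B₁ B₂ : ℝ → ℝ → (Fin 4 → ℝ))
    (k₁ k₂ β₁ β₂ β₃ β₄ : ℝ → ℝ → ℝ)
    (ψ₁ ψ₂ ψ₃ : ℝ → ℝ → ℝ)
    (hγsmooth : ContDiff ℝ (⊤ : ℕ∞) (fun p : ℝ × ℝ => γ p.1 p.2))
    (hTsmooth : ContDiff ℝ (⊤ : ℕ∞) (fun p : ℝ × ℝ => T p.1 p.2))
    (hNsmooth : ContDiff ℝ (⊤ : ℕ∞) (fun p : ℝ × ℝ => N p.1 p.2))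
    (hB₁smooth : ContDiff ℝ (⊤ : ℕ∞) (fun p : ℝ × ℝ => B₁ p.1 p.2))
    (hB₂smooth : ContDiff ℝ (⊤ : ℕ∞) (fun p : ℝ × ℝ => B₂ p.1 p.2))
    (hk₁smooth : ContDiff ℝ (⊤ : ℕ∞) (fun p : ℝ × ℝ => k₁ p.1 p.2))
    (hk₂smooth : ContDiff ℝ (⊤ : ℕ∞) (fun p : ℝ × ℝ => k₂ p.1 p.2))
    (hβ₁smooth : ContDiff ℝ (⊤ : ℕ∞) (fun p : ℝ × ℝ => β₁ p.1 p.2))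
    (hβ₂smooth : ContDiff ℝ (⊤ : ℕ∞) (fun p : ℝ × ℝ => β₂ p.1 p.2))
    (hβ₃smooth : ContDiff ℝ (⊤ : ℕ∞) (fun p : ℝ × ℝ => β₃ p.1 p.2))
    (hβ₄smooth : ContDiff ℝ (⊤ : ℕ∞) (fun p : ℝ × ℝ => β₄ p.1 p.2))
    (hTT : ∀ s t : ℝ, mink (T s t) (T s t) = 1)
    (hNN : ∀ s t : ℝ, mink (N s t) (N s t) = 1)
    (hB₁B₁ : ∀ s t : ℝ, mink (B₁ s t) (B₁ s t) = 0)
    (hB₂B₂ : ∀ s t : ℝ, mink (B₂ s t) (B₂ s t) = 0)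
    (hB₁B₂ : ∀ s t : ℝ, mink (B₁ s t) (B₂ s t) = 1)
    (hTN : ∀ s t : ℝ, mink (T s t) (N s t) = 0)
    (hTB₁ : ∀ s t : ℝ, mink (T s t) (B₁ s t) = 0)
    (hTB₂ : ∀ s t : ℝ, mink (T s t) (B₂ s t) = 0)
    (hNB₁ : ∀ s t : ℝ, mink (N s t) (B₁ s t) = 0)
    (hNB₂ : ∀ s t : ℝ, mink (N s t) (B₂ s t) = 0)
    -- arclength parametrization and Frenet equations (k₃ = 0)
    (hT : ∀ s t : ℝ, T s t = deriv (fun x => γ x t) s)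
    (hunit : ∀ s t : ℝ, mnorm (deriv (fun x => γ x t) s) = 1)
    (hfr₁ : ∀ s t : ℝ, deriv (fun x => T x t) s = k₁ s t • N s t)
    (hfr₂ : ∀ s t : ℝ, deriv (fun x => N x t) s = -(k₁ s t) • T s t + k₂ s t • B₁ s t)
    (hfr₃ : ∀ s t : ℝ, deriv (fun x => B₁ x t) s = 0)
    (hfr₄ : ∀ s t : ℝ, deriv (fun x => B₂ x t) s = -(k₂ s t) • N s t)
    (hflow : ∀ s t : ℝ, deriv (fun x => γ s x) t =
      β₁ s t • T s t + β₂ s t • N s t + β₃ s t • B₁ s t + β₄ s t • B₂ s t)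
    -- inextensibility: ∂β₁/∂s = β₂k₁
    (hinext : ∀ s t : ℝ, deriv (fun x => β₁ x t) s = β₂ s t * k₁ s t)
    (hψ₁ : ∀ s t : ℝ, ψ₁ s t = mink (deriv (fun x => N s x) t) (B₁ s t))
    (hψ₂ : ∀ s t : ℝ, ψ₂ s t = mink (deriv (fun x => N s x) t) (B₂ s t))
    (hψ₃ : ∀ s t : ℝ, ψ₃ s t = mink (deriv (fun x => B₁ s x) t) (B₂ s t)) :
    ∀ s t : ℝ,
      deriv (fun x => N s x) t =
        -(deriv (fun x => β₂ x t) s + β₁ s t * k₁ s t - β₄ s t * k₂ s t) • T s t +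
        ψ₂ s t • B₁ s t + ψ₁ s t • B₂ s t ∧
      deriv (fun x => B₁ s x) t =
        -(deriv (fun x => β₄ x t) s) • T s t - ψ₁ s t • N s t + ψ₃ s t • B₁ s t ∧
      deriv (fun x => B₂ s x) t =
        -(deriv (fun x => β₃ x t) s + k₂ s t * β₂ s t) • T s t - ψ₂ s t • N s t -
        ψ₃ s t • B₂ s t := by
  intro s t
  -- t-derivatives of the frame (as HasDerivAt facts)
  have hT_t : HasDerivAt (fun x => T s x) (deriv (fun x => T s x) t) t := sliceT hTsmooth s t
  have hN_t : HasDerivAt (fun x => N s x) (deriv (fun x => N s x) t) t := sliceT hNsmooth s t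
  have hB₁_t : HasDerivAt (fun x => B₁ s x) (deriv (fun x => B₁ s x) t) t := sliceT hB₁smooth s t
  have hB₂_t : HasDerivAt (fun x => B₂ s x) (deriv (fun x => B₂ s x) t) t := sliceT hB₂smooth s t
  -- value of ∂T/∂t via Clairaut and the flow equation
  have hTt : deriv (fun x => T s x) t =
      (β₁ s t * k₁ s t + deriv (fun x => β₂ x t) s - β₄ s t * k₂ s t) • N s t +
      (β₂ s t * k₂ s t + deriv (fun x => β₃ x t) s) • B₁ s t +
      (deriv (fun x => β₄ x t) s) • B₂ s t := by
    have e1 : (fun x => T s x) = fun x => deriv (fun y => γ y x) s := funext fun x => hT s x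
    have hcl : deriv (fun x => deriv (fun y => γ y x) s) t
        = deriv (fun x => deriv (fun y => γ x y) t) s := clairaut hγsmooth s t
    have e2 : (fun x => deriv (fun y => γ x y) t)
        = fun x => β₁ x t • T x t + β₂ x t • N x t + β₃ x t • B₁ x t + β₄ x t • B₂ x t :=
      funext fun x => hflow x t
    have hTs : HasDerivAt (fun x => T x t) (k₁ s t • N s t) s := by
      have := sliceS hTsmooth s t; rwa [hfr₁ s t] at this
    have hNs : HasDerivAt (fun x => N x t) (-(k₁ s t) • T s t + k₂ s t • B₁ s t) s := by
      have := sliceS hNsmooth s t; rwa [hfr₂ s t] at this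
    have hB₁s : HasDerivAt (fun x => B₁ x t) (0 : Fin 4 → ℝ) s := by
      have := sliceS hB₁smooth s t; rwa [hfr₃ s t] at this
    have hB₂s : HasDerivAt (fun x => B₂ x t) (-(k₂ s t) • N s t) s := by
      have := sliceS hB₂smooth s t; rwa [hfr₄ s t] at this
    have hβ₁s : HasDerivAt (fun x => β₁ x t) (β₂ s t * k₁ s t) s := by
      have := sliceS hβ₁smooth s t; rwa [hinext s t] at this
    have hβ₂s : HasDerivAt (fun x => β₂ x t) (deriv (fun x => β₂ x t) s) s :=
      sliceS hβ₂smooth s t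
    have hβ₃s : HasDerivAt (fun x => β₃ x t) (deriv (fun x => β₃ x t) s) s :=
      sliceS hβ₃smooth s t
    have hβ₄s : HasDerivAt (fun x => β₄ x t) (deriv (fun x => β₄ x t) s) s :=
      sliceS hβ₄smooth s t
    have hbig : HasDerivAt (fun x => β₁ x t • T x t + β₂ x t • N x t + β₃ x t • B₁ x t +
      β₄ x t • B₂ x t) _ s := (((hβ₁s.smul hTs).add (hβ₂s.smul hNs)).add (hβ₃s.smul hB₁s)).add
      (hβ₄s.smul hB₂s)
    rw [e1, hcl, e2, hbig.deriv]
    funext i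
    simp [Pi.add_apply, Pi.smul_apply, smul_eq_mul, Pi.zero_apply, Pi.neg_apply,
      Pi.sub_apply]
    ring
  -- abbreviations for the three target coefficients of ∂T/∂t
  set a : ℝ := β₁ s t * k₁ s t + deriv (fun x => β₂ x t) s - β₄ s t * k₂ s t with ha
  set b : ℝ := β₂ s t * k₂ s t + deriv (fun x => β₃ x t) s with hb
  set c : ℝ := deriv (fun x => β₄ x t) s with hc
  -- products of ∂T/∂t against the frame
  have mNTt : mink (N s t) (deriv (fun x => T s x) t) = a := by
    rw [hTt, mink_combo3', hNN s t, hNB₁ s t, hNB₂ s t]; ring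
  have mB₁Tt : mink (B₁ s t) (deriv (fun x => T s x) t) = c := by
    rw [hTt, mink_combo3', mink_comm' (B₁ s t) (N s t), hNB₁ s t, hB₁B₁ s t,
      hB₁B₂ s t]; ring
  have mB₂Tt : mink (B₂ s t) (deriv (fun x => T s x) t) = b := by
    rw [hTt, mink_combo3', mink_comm' (B₂ s t) (N s t), hNB₂ s t,
      mink_comm' (B₂ s t) (B₁ s t), hB₁B₂ s t, hB₂B₂ s t]; ring
  -- differentiated orthonormality relations
  have relTN := pair_rel hT_t hN_t (fun x => hTN s x)
  have relTB₁ := pair_rel hT_t hB₁_t (fun x => hTB₁ s x)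
  have relTB₂ := pair_rel hT_t hB₂_t (fun x => hTB₂ s x)
  have relNN := pair_rel hN_t hN_t (fun x => hNN s x)
  have relNB₁ := pair_rel hN_t hB₁_t (fun x => hNB₁ s x)
  have relNB₂ := pair_rel hN_t hB₂_t (fun x => hNB₂ s x)
  have relB₁B₁ := pair_rel hB₁_t hB₁_t (fun x => hB₁B₁ s x)
  have relB₂B₂ := pair_rel hB₂_t hB₂_t (fun x => hB₂B₂ s x)
  have relB₁B₂ := pair_rel hB₁_t hB₂_t (fun x => hB₁B₂ s x)
  -- products of ∂N/∂t against the frame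
  have mNtT : mink (deriv (fun x => N s x) t) (T s t) = -a := by
    rw [mink_comm']
    rw [mink_comm' (deriv (fun x => T s x) t) (N s t), mNTt] at relTN
    linarith
  have mNtN : mink (deriv (fun x => N s x) t) (N s t) = 0 := by
    rw [mink_comm' (N s t) (deriv (fun x => N s x) t)] at relNN
    linarith
  have mNtB₁ : mink (deriv (fun x => N s x) t) (B₁ s t) = ψ₁ s t := (hψ₁ s t).symm
  have mNtB₂ : mink (deriv (fun x => N s x) t) (B₂ s t) = ψ₂ s t := (hψ₂ s t).symm
  -- products of ∂B₁/∂t against the frame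
  have mB₁tT : mink (deriv (fun x => B₁ s x) t) (T s t) = -c := by
    rw [mink_comm']
    rw [mink_comm' (deriv (fun x => T s x) t) (B₁ s t), mB₁Tt] at relTB₁
    linarith
  have mB₁tN : mink (deriv (fun x => B₁ s x) t) (N s t) = -(ψ₁ s t) := by
    rw [mink_comm']
    rw [mNtB₁] at relNB₁
    linarith
  have mB₁tB₁ : mink (deriv (fun x => B₁ s x) t) (B₁ s t) = 0 := by
    rw [mink_comm' (B₁ s t) (deriv (fun x => B₁ s x) t)] at relB₁B₁
    linarith
  have mB₁tB₂ : mink (deriv (fun x => B₁ s x) t) (B₂ s t) = ψ₃ s t := (hψ₃ s t).symm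
  -- products of ∂B₂/∂t against the frame
  have mB₂tT : mink (deriv (fun x => B₂ s x) t) (T s t) = -b := by
    rw [mink_comm']
    rw [mink_comm' (deriv (fun x => T s x) t) (B₂ s t), mB₂Tt] at relTB₂
    linarith
  have mB₂tN : mink (deriv (fun x => B₂ s x) t) (N s t) = -(ψ₂ s t) := by
    rw [mink_comm']
    rw [mNtB₂] at relNB₂
    linarith
  have mB₂tB₂ : mink (deriv (fun x => B₂ s x) t) (B₂ s t) = 0 := by
    rw [mink_comm' (B₂ s t) (deriv (fun x => B₂ s x) t)] at relB₂B₂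
    linarith
  have mB₂tB₁ : mink (deriv (fun x => B₂ s x) t) (B₁ s t) = -(ψ₃ s t) := by
    rw [mink_comm']
    rw [mB₁tB₂] at relB₁B₂
    linarith
  -- decompositions in the frame
  have hdN := basis_decomp (T s t) (N s t) (B₁ s t) (B₂ s t) (deriv (fun x => N s x) t)
    (hTT s t) (hNN s t) (hB₁B₁ s t) (hB₂B₂ s t) (hB₁B₂ s t) (hTN s t) (hTB₁ s t)
    (hTB₂ s t) (hNB₁ s t) (hNB₂ s t)
  have hdB₁ := basis_decomp (T s t) (N s t) (B₁ s t) (B₂ s t) (deriv (fun x => B₁ s x) t)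
    (hTT s t) (hNN s t) (hB₁B₁ s t) (hB₂B₂ s t) (hB₁B₂ s t) (hTN s t) (hTB₁ s t)
    (hTB₂ s t) (hNB₁ s t) (hNB₂ s t)
  have hdB₂ := basis_decomp (T s t) (N s t) (B₁ s t) (B₂ s t) (deriv (fun x => B₂ s x) t)
    (hTT s t) (hNN s t) (hB₁B₁ s t) (hB₂B₂ s t) (hB₁B₂ s t) (hTN s t) (hTB₁ s t)
    (hTB₂ s t) (hNB₁ s t) (hNB₂ s t)
  rw [mNtT, mNtN, mNtB₁, mNtB₂] at hdN
  rw [mB₁tT, mB₁tN, mB₁tB₁, mB₁tB₂] at hdB₁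
  rw [mB₂tT, mB₂tN, mB₂tB₁, mB₂tB₂] at hdB₂
  refine ⟨?_, ?_, ?_⟩
  · rw [hdN]
    funext i
    simp only [Pi.add_apply, Pi.smul_apply, Pi.zero_apply, smul_eq_mul, ha]
    ring
  · rw [hdB₁]
    funext i
    simp only [Pi.add_apply, Pi.smul_apply, Pi.sub_apply, Pi.zero_apply, smul_eq_mul, hc]
    ring
  · rw [hdB₂]
    funext i
    simp only [Pi.add_apply, Pi.smul_apply, Pi.sub_apply, Pi.zero_apply, smul_eq_mul, hb]
    ring
end
end

section
/- Let γ(s,t) be an arclength-parametrized inextensible flow of partially null curves in E⁴₁ with partially null Frenet frame {T, N, B₁, B₂}, curvatures k₁, k₂ (k₃ = 0), flow ∂γ/∂t = β₁T + β₂N + β₃B₁ + β₄B₂ (so ∂β₁/∂s = β₂k₁), and ψ₁ = ⟨∂N/∂t, B₁⟩. If ψ₁ ≠ 0, then k₁ = (1/ψ₁) ∂²β₄/∂s². -/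
/-!
Formalization of inextensible flows of partially null / pseudo null curves in
Minkowski space-time `E⁴₁` (ℝ⁴ with signature (-,+,+,+)).
-/

noncomputable section

section Helpers

variable {V : Type*} [NormedAddCommGroup V] [NormedSpace ℝ V]

lemma hasDerivAt_fst (f : ℝ → ℝ → V)
    (hf : ContDiff ℝ (⊤ : ℕ∞) (fun p : ℝ × ℝ => f p.1 p.2)) (s t : ℝ) :
    HasDerivAt (fun x => f x t)
      (fderiv ℝ (fun p : ℝ × ℝ => f p.1 p.2) (s, t) (1, 0)) s := by
  have h1 : HasDerivAt (fun x : ℝ => (x, t)) ((1 : ℝ), (0 : ℝ)) s :=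
    (hasDerivAt_id s).prodMk (hasDerivAt_const s t)
  exact ((hf.differentiable (by simp) (s, t)).hasFDerivAt.comp_hasDerivAt s h1)

lemma hasDerivAt_snd (f : ℝ → ℝ → V)
    (hf : ContDiff ℝ (⊤ : ℕ∞) (fun p : ℝ × ℝ => f p.1 p.2)) (s t : ℝ) :
    HasDerivAt (fun y => f s y)
      (fderiv ℝ (fun p : ℝ × ℝ => f p.1 p.2) (s, t) (0, 1)) t := by
  have h1 : HasDerivAt (fun y : ℝ => (s, y)) ((0 : ℝ), (1 : ℝ)) t :=
    (hasDerivAt_const t s).prodMk (hasDerivAt_id t)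
  exact ((hf.differentiable (by simp) (s, t)).hasFDerivAt.comp_hasDerivAt t h1)

lemma hd_s (f : ℝ → ℝ → V)
    (hf : ContDiff ℝ (⊤ : ℕ∞) (fun p : ℝ × ℝ => f p.1 p.2)) (s t : ℝ) :
    HasDerivAt (fun x => f x t) (deriv (fun x => f x t) s) s :=
  (hasDerivAt_fst f hf s t).differentiableAt.hasDerivAt

lemma hd_t (f : ℝ → ℝ → V)
    (hf : ContDiff ℝ (⊤ : ℕ∞) (fun p : ℝ × ℝ => f p.1 p.2)) (s t : ℝ) :
    HasDerivAt (fun y => f s y) (deriv (fun y => f s y) t) t :=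
  (hasDerivAt_snd f hf s t).differentiableAt.hasDerivAt

/-- Clairaut/Schwarz: the map `x ↦ ∂ₜ f(x,·)(t)` has derivative `∂ₜ (∂ₛ f)(s,·)(t)` at `s`. -/
lemma hasDerivAt_deriv_comm (f : ℝ → ℝ → V)
    (hf : ContDiff ℝ (⊤ : ℕ∞) (fun p : ℝ × ℝ => f p.1 p.2)) (s t : ℝ) :
    HasDerivAt (fun x => deriv (fun y => f x y) t)
      (deriv (fun y => deriv (fun x => f x y) s) t) s := by
  set F : ℝ × ℝ → V := fun p => f p.1 p.2 with hF
  have hG : ContDiff ℝ (⊤ : ℕ∞) (fderiv ℝ F) := by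
    apply hf.fderiv_right (m := (⊤ : ℕ∞))
    exact le_of_eq (by norm_cast)
  have hGd : HasFDerivAt (fderiv ℝ F) (fderiv ℝ (fderiv ℝ F) (s, t)) (s, t) :=
    (hG.differentiable (by simp) (s, t)).hasFDerivAt
  set L2 := fderiv ℝ (fderiv ℝ F) (s, t) with hL2
  -- partial derivatives expressed via fderiv
  have e2 : ∀ a b : ℝ, deriv (fun y => f a y) b = fderiv ℝ F (a, b) (0, 1) :=
    fun a b => (hasDerivAt_snd f hf a b).deriv
  have e1 : ∀ a b : ℝ, deriv (fun x => f x b) a = fderiv ℝ F (a, b) (1, 0) :=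
    fun a b => (hasDerivAt_fst f hf a b).deriv
  -- the second-order derivatives of the partial maps
  have A := fun v : ℝ × ℝ => ContinuousLinearMap.apply ℝ V v
  have h1 : HasDerivAt (fun x => fderiv ℝ F (x, t) (0, 1)) (L2 (1, 0) (0, 1)) s := by
    have hc : HasDerivAt (fun x : ℝ => (x, t)) ((1 : ℝ), (0 : ℝ)) s :=
      (hasDerivAt_id s).prodMk (hasDerivAt_const s t)
    have := (((ContinuousLinearMap.apply ℝ V ((0 : ℝ), (1 : ℝ))).hasFDerivAt.comp
      (s, t) hGd).comp_hasDerivAt s hc)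
    simpa [Function.comp_def] using this
  have h2 : HasDerivAt (fun y => fderiv ℝ F (s, y) (1, 0)) (L2 (0, 1) (1, 0)) t := by
    have hc : HasDerivAt (fun y : ℝ => (s, y)) ((0 : ℝ), (1 : ℝ)) t :=
      (hasDerivAt_const t s).prodMk (hasDerivAt_id t)
    have := (((ContinuousLinearMap.apply ℝ V ((1 : ℝ), (0 : ℝ))).hasFDerivAt.comp
      (s, t) hGd).comp_hasDerivAt t hc)
    simpa [Function.comp_def] using this
  have hsymm : L2 (1, 0) (0, 1) = L2 (0, 1) (1, 0) := by
    have := (hf.contDiffAt (x := (s, t))).isSymmSndFDerivAt (n := ((⊤ : ℕ∞) : WithTop ℕ∞))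
      (by refine le_trans ?_ (WithTop.coe_le_coe.mpr (le_top : (2:ℕ∞) ≤ ⊤)); norm_cast; simp)
    exact this ((1 : ℝ), (0 : ℝ)) ((0 : ℝ), (1 : ℝ))
  have efun : (fun x => deriv (fun y => f x y) t) = fun x => fderiv ℝ F (x, t) (0, 1) :=
    funext fun a => e2 a t
  have eval : deriv (fun y => deriv (fun x => f x y) s) t = L2 (0, 1) (1, 0) := by
    have : (fun y => deriv (fun x => f x y) s) = fun y => fderiv ℝ F (s, y) (1, 0) :=
      funext fun b => e1 s b
    rw [this, h2.deriv]
  rw [efun, eval, ← hsymm]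
  exact h1

end Helpers

section Mink

lemma mink_add_left (v w u : Fin 4 → ℝ) : mink (v + w) u = mink v u + mink w u := by
  simp [mink]; ring

lemma mink_smul_left (a : ℝ) (v u : Fin 4 → ℝ) : mink (a • v) u = a * mink v u := by
  simp [mink]; ring

lemma mink_zero_left (u : Fin 4 → ℝ) : mink 0 u = 0 := by simp [mink]

lemma mink_zero_right (u : Fin 4 → ℝ) : mink u 0 = 0 := by simp [mink]

lemma mink_comm (v w : Fin 4 → ℝ) : mink v w = mink w v := by simp [mink]; ring

lemma HasDerivAt.mink {f g : ℝ → Fin 4 → ℝ} {f' g' : Fin 4 → ℝ} {x : ℝ}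
    (hf : HasDerivAt f f' x) (hg : HasDerivAt g g' x) :
    HasDerivAt (fun y => mink (f y) (g y)) (mink f' (g x) + mink (f x) g') x := by
  have hfi := hasDerivAt_pi.1 hf
  have hgi := hasDerivAt_pi.1 hg
  have H := ((((hfi 0).mul (hgi 0)).neg.add ((hfi 1).mul (hgi 1))).add
    ((hfi 2).mul (hgi 2))).add ((hfi 3).mul (hgi 3))
  convert H using 1 <;> first | rfl | (simp only [_root_.mink]; ring)

end Mink

theorem k1_formula_partially_null
    (γ T N B₁ B₂ : ℝ → ℝ → (Fin 4 → ℝ))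
    (k₁ k₂ β₁ β₂ β₃ β₄ : ℝ → ℝ → ℝ)
    (ψ₁ : ℝ → ℝ → ℝ)
    (hγsmooth : ContDiff ℝ (⊤ : ℕ∞) (fun p : ℝ × ℝ => γ p.1 p.2))
    (hTsmooth : ContDiff ℝ (⊤ : ℕ∞) (fun p : ℝ × ℝ => T p.1 p.2))
    (hNsmooth : ContDiff ℝ (⊤ : ℕ∞) (fun p : ℝ × ℝ => N p.1 p.2))
    (hB₁smooth : ContDiff ℝ (⊤ : ℕ∞) (fun p : ℝ × ℝ => B₁ p.1 p.2))
    (hB₂smooth : ContDiff ℝ (⊤ : ℕ∞) (fun p : ℝ × ℝ => B₂ p.1 p.2))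
    (hk₁smooth : ContDiff ℝ (⊤ : ℕ∞) (fun p : ℝ × ℝ => k₁ p.1 p.2))
    (hk₂smooth : ContDiff ℝ (⊤ : ℕ∞) (fun p : ℝ × ℝ => k₂ p.1 p.2))
    (hβ₁smooth : ContDiff ℝ (⊤ : ℕ∞) (fun p : ℝ × ℝ => β₁ p.1 p.2))
    (hβ₂smooth : ContDiff ℝ (⊤ : ℕ∞) (fun p : ℝ × ℝ => β₂ p.1 p.2))
    (hβ₃smooth : ContDiff ℝ (⊤ : ℕ∞) (fun p : ℝ × ℝ => β₃ p.1 p.2))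
    (hβ₄smooth : ContDiff ℝ (⊤ : ℕ∞) (fun p : ℝ × ℝ => β₄ p.1 p.2))
    (hTT : ∀ s t : ℝ, mink (T s t) (T s t) = 1)
    (hNN : ∀ s t : ℝ, mink (N s t) (N s t) = 1)
    (hB₁B₁ : ∀ s t : ℝ, mink (B₁ s t) (B₁ s t) = 0)
    (hB₂B₂ : ∀ s t : ℝ, mink (B₂ s t) (B₂ s t) = 0)
    (hB₁B₂ : ∀ s t : ℝ, mink (B₁ s t) (B₂ s t) = 1)
    (hTN : ∀ s t : ℝ, mink (T s t) (N s t) = 0)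
    (hTB₁ : ∀ s t : ℝ, mink (T s t) (B₁ s t) = 0)
    (hTB₂ : ∀ s t : ℝ, mink (T s t) (B₂ s t) = 0)
    (hNB₁ : ∀ s t : ℝ, mink (N s t) (B₁ s t) = 0)
    (hNB₂ : ∀ s t : ℝ, mink (N s t) (B₂ s t) = 0)
    -- arclength parametrization and Frenet equations (k₃ = 0)
    (hT : ∀ s t : ℝ, T s t = deriv (fun x => γ x t) s)
    (hunit : ∀ s t : ℝ, mnorm (deriv (fun x => γ x t) s) = 1)
    (hfr₁ : ∀ s t : ℝ, deriv (fun x => T x t) s = k₁ s t • N s t)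
    (hfr₂ : ∀ s t : ℝ, deriv (fun x => N x t) s = -(k₁ s t) • T s t + k₂ s t • B₁ s t)
    (hfr₃ : ∀ s t : ℝ, deriv (fun x => B₁ x t) s = 0)
    (hfr₄ : ∀ s t : ℝ, deriv (fun x => B₂ x t) s = -(k₂ s t) • N s t)
    (hflow : ∀ s t : ℝ, deriv (fun x => γ s x) t =
      β₁ s t • T s t + β₂ s t • N s t + β₃ s t • B₁ s t + β₄ s t • B₂ s t)
    -- inextensibility: ∂β₁/∂s = β₂k₁
    (hinext : ∀ s t : ℝ, deriv (fun x => β₁ x t) s = β₂ s t * k₁ s t)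
    (hψ₁ : ∀ s t : ℝ, ψ₁ s t = mink (deriv (fun x => N s x) t) (B₁ s t)) :
    ∀ s t : ℝ, ψ₁ s t ≠ 0 →
      k₁ s t = (1 / ψ₁ s t) * deriv (fun x => deriv (fun y => β₄ y t) x) s := by
  intro s t hpsi
  -- abbreviations: derived inner-product facts
  have hB₂B₁ : ∀ a b : ℝ, mink (B₂ a b) (B₁ a b) = 1 := fun a b => by
    rw [mink_comm]; exact hB₁B₂ a b
  -- Claim 1: ⟨∂T/∂t, B₁⟩ = ∂β₄/∂s at every (x, t)
  have claim1 : ∀ x : ℝ,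
      mink (deriv (fun y => T x y) t) (B₁ x t) = deriv (fun z => β₄ z t) x := by
    intro x
    have hmix := hasDerivAt_deriv_comm γ hγsmooth x t
    have e1 : (fun y => deriv (fun z => γ z y) x) = fun y => T x y :=
      funext fun y => (hT x y).symm
    rw [e1] at hmix
    have e2 : (fun z => deriv (fun y => γ z y) t)
        = fun z => β₁ z t • T z t + β₂ z t • N z t + β₃ z t • B₁ z t + β₄ z t • B₂ z t :=
      funext fun z => hflow z t
    rw [e2] at hmix
    have hT' : HasDerivAt (fun z => T z t) (k₁ x t • N x t) x := by
      have h := hd_s T hTsmooth x t; rwa [hfr₁ x t] at h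
    have hN' : HasDerivAt (fun z => N z t)
        (-(k₁ x t) • T x t + k₂ x t • B₁ x t) x := by
      have h := hd_s N hNsmooth x t; rwa [hfr₂ x t] at h
    have hB₁' : HasDerivAt (fun z => B₁ z t) 0 x := by
      have h := hd_s B₁ hB₁smooth x t; rwa [hfr₃ x t] at h
    have hB₂' : HasDerivAt (fun z => B₂ z t) (-(k₂ x t) • N x t) x := by
      have h := hd_s B₂ hB₂smooth x t; rwa [hfr₄ x t] at h
    have hb₁ := hd_s β₁ hβ₁smooth x t
    have hb₂ := hd_s β₂ hβ₂smooth x t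
    have hb₃ := hd_s β₃ hβ₃smooth x t
    have hb₄ := hd_s β₄ hβ₄smooth x t
    have hco := (((hb₁.smul hT').add (hb₂.smul hN')).add (hb₃.smul hB₁')).add
      (hb₄.smul hB₂')
    have hud := hmix.unique hco
    rw [hud]
    simp only [mink_add_left, mink_smul_left, smul_zero, mink_zero_left,
      hTB₁ x t, hNB₁ x t, hB₁B₁ x t, hB₂B₁ x t, mul_zero, mul_one, add_zero, zero_add,
      mul_comm]
    ring
  -- Claim 2: differentiate Claim 1 in s
  have hmixT := hasDerivAt_deriv_comm T hTsmooth s t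
  have e3 : (fun y => deriv (fun z => T z y) s) = fun y => k₁ s y • N s y :=
    funext fun y => hfr₁ s y
  rw [e3] at hmixT
  have hk := hd_t k₁ hk₁smooth s t
  have hNt := hd_t N hNsmooth s t
  have hkN : deriv (fun y => k₁ s y • N s y) t = _ := (hk.smul hNt).deriv
  rw [hkN] at hmixT
  have hB₁s : HasDerivAt (fun z => B₁ z t) 0 s := by
    have h := hd_s B₁ hB₁smooth s t; rwa [hfr₃ s t] at h
  have hg := hmixT.mink hB₁s
  have hg2 : HasDerivAt (fun x => deriv (fun z => β₄ z t) x)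
      (mink (k₁ s t • deriv (fun y => N s y) t + deriv (fun y => k₁ s y) t • N s t)
        (B₁ s t)
        + mink (deriv (fun y => T s y) t) 0) s :=
    hg.congr_of_eventuallyEq (Filter.Eventually.of_forall fun x => (claim1 x).symm)
  have hfinal := hg2.deriv
  rw [hψ₁ s t] at hpsi ⊢
  rw [hfinal]
  simp only [mink_add_left, mink_smul_left, mink_zero_right, hNB₁ s t, mul_zero,
    add_zero]
  field_simp
end
end
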